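/- Let π and π' be two everywhere-positive product policies on 𝒜^N and let Φ : 𝒜^N → ℝ satisfy 0 ≤ Φ(a) ≤ Φ_max for all a. Then |Φ(π') − Φ(π) − Σ_{i=1}^N (Φ(π_i', π_{-i}) − Φ(π))| ≤ 2 Φ_max · J(π', π), where Φ(π_i', π_{-i}) denotes the expectation of Φ under the product policy obtained from π by replacing π_i with π_i'. -/

import Mathlib

open Finset

noncomputable section

/-- A probability distribution on a finite action set. -/
def IsDist {A : Type*} [Fintype A] (p : A → ℝ) : Prop :=
  (∀ a, 0 ≤ p a) ∧ ∑ a, p a = 1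

/-- Shannon entropy of a distribution. -/
def entropy {A : Type*} [Fintype A] (p : A → ℝ) : ℝ :=
  -∑ a, p a * Real.log (p a)

/-- Kullback-Leibler divergence on a finite set. -/
def KLdiv {A : Type*} [Fintype A] (p q : A → ℝ) : ℝ :=
  ∑ a, p a * (Real.log (p a) - Real.log (q a))

/-- Jeffrey divergence: the symmetrized KL divergence. -/
def Jdiv {A : Type*} [Fintype A] (p q : A → ℝ) : ℝ :=
  KLdiv p q + KLdiv q p

/-- Joint product distribution induced by a product policy. -/
def jointPmf {N : ℕ} {A : Type*} [Fintype A] (π : Fin N → A → ℝ) :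
    (Fin N → A) → ℝ :=
  fun a => ∏ i, π i (a i)

/-- Expectation of `f` under the product policy `π`. -/
def expVal {N : ℕ} {A : Type*} [Fintype A] (π : Fin N → A → ℝ)
    (f : (Fin N → A) → ℝ) : ℝ :=
  ∑ a, jointPmf π a * f a

/-- Point mass at action `a`. -/
def pmfOf {A : Type*} [DecidableEq A] (a : A) : A → ℝ :=
  fun b => if b = a then 1 else 0

/-- Marginalized utility `r_i^π(a) = E_{a_{-i} ∼ π_{-i}}[u_i(a, a_{-i})]`. -/
def margU {N : ℕ} {A : Type*} [Fintype A] [DecidableEq A]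
    (u : Fin N → (Fin N → A) → ℝ) (π : Fin N → A → ℝ) (i : Fin N) (a : A) : ℝ :=
  expVal (Function.update π i (pmfOf a)) (u i)

/-- Entropy-regularized utility `u_{i,τ}(π) = u_i(π) + τ H(π_i)`. -/
def uReg {N : ℕ} {A : Type*} [Fintype A] (u : Fin N → (Fin N → A) → ℝ) (τ : ℝ)
    (i : Fin N) (π : Fin N → A → ℝ) : ℝ :=
  expVal π (u i) + τ * entropy (π i)

/-- `QRE-gap_τ(π)`. -/
def QREgap {N : ℕ} {A : Type*} [Fintype A] [DecidableEq A]
    (u : Fin N → (Fin N → A) → ℝ) (τ : ℝ) (π : Fin N → A → ℝ) : ℝ :=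
  sSup {x | ∃ (i : Fin N) (p : A → ℝ), IsDist p ∧
    x = uReg u τ i (Function.update π i p) - uReg u τ i π}

/-- `NE-gap(π)`. -/
def NEgap {N : ℕ} {A : Type*} [Fintype A] [DecidableEq A]
    (u : Fin N → (Fin N → A) → ℝ) (π : Fin N → A → ℝ) : ℝ :=
  sSup {x | ∃ (i : Fin N) (p : A → ℝ), IsDist p ∧
    x = expVal (Function.update π i p) (u i) - expVal π (u i)}

/-- Entropy-regularized potential `Φ_τ(π) = Φ(π) + τ ∑_i H(π_i)`. -/
def regPot {N : ℕ} {A : Type*} [Fintype A] (Φ : (Fin N → A) → ℝ) (τ : ℝ)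
    (π : Fin N → A → ℝ) : ℝ :=
  expVal π Φ + τ * ∑ i, entropy (π i)

/-- `Φ` is a potential function for the game with utilities `u`. -/
def IsPotential {N : ℕ} {A : Type*} [Fintype A] [DecidableEq A]
    (u : Fin N → (Fin N → A) → ℝ) (Φ : (Fin N → A) → ℝ) : Prop :=
  ∀ (i : Fin N) (a : Fin N → A) (a' : A),
    u i a - u i (Function.update a i a') = Φ a - Φ (Function.update a i a')

/-- The independent entropy-regularized NPG update rule. -/
def NPGstep {N : ℕ} {A : Type*} [Fintype A] [DecidableEq A]
    (u : Fin N → (Fin N → A) → ℝ) (τ η : ℝ) (π : ℕ → Fin N → A → ℝ) : Prop :=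
  ∀ t i a, π (t+1) i a =
    π t i a ^ (1 - η * τ) * Real.exp (η * margU u (π t) i a) /
      ∑ a', π t i a' ^ (1 - η * τ) * Real.exp (η * margU u (π t) i a')

/-- Best-response policy `π_i^⋆(a) ∝ exp(r_i^π(a)/τ)`. -/
def bestResp {N : ℕ} {A : Type*} [Fintype A] [DecidableEq A]
    (u : Fin N → (Fin N → A) → ℝ) (τ : ℝ) (π : Fin N → A → ℝ) (i : Fin N) :
    A → ℝ :=
  fun a => Real.exp (margU u π i a / τ) / ∑ a', Real.exp (margU u π i a' / τ)

lemma aux_tlog {t : ℝ} (ht : 0 < t) : t - 1 ≤ t * Real.log t := by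
  have h := Real.log_le_sub_one_of_pos (inv_pos.mpr ht)
  rw [Real.log_inv] at h
  have h' := mul_le_mul_of_nonneg_left h ht.le
  rw [mul_sub, mul_inv_cancel₀ ht.ne'] at h'
  nlinarith [h']

lemma aux_phi_le_h {t : ℝ} (ht : 0 < t) : t - 1 - Real.log t ≤ (t - 1) * Real.log t := by
  nlinarith [aux_tlog ht]

lemma aux_phi_nonneg {t : ℝ} (ht : 0 < t) : 0 ≤ t - 1 - Real.log t := by
  linarith [Real.log_le_sub_one_of_pos ht]

lemma aux_h_nonneg {t : ℝ} (ht : 0 < t) : 0 ≤ (t - 1) * Real.log t := by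
  rcases le_or_gt 1 t with h | h
  · exact mul_nonneg (by linarith) (Real.log_nonneg h)
  · exact mul_nonneg_of_nonpos_of_nonpos (by linarith) (Real.log_nonpos ht.le h.le)

lemma sum_prod_pi {N : ℕ} {A : Type*} [Fintype A] (g : Fin N → A → ℝ) :
    ∑ a : Fin N → A, ∏ j, g j (a j) = ∏ j, ∑ b, g j b := by
  rw [Finset.prod_univ_sum, Fintype.piFinset_univ]

lemma key_ineq {ι : Type*} [Fintype ι] (x : ι → ℝ) (hx : ∀ i, 0 < x i) :
    |(∏ i, x i) - 1 - ∑ i, (x i - 1)| ≤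
      ((∏ i, x i) - 1) * Real.log (∏ i, x i) + ∑ i, (x i - 1) * Real.log (x i) := by
  have hP : 0 < ∏ i, x i := Finset.prod_pos fun i _ => hx i
  have hlogP : Real.log (∏ i, x i) = ∑ i, Real.log (x i) :=
    Real.log_prod (fun i _ => (hx i).ne')
  have hS : (∑ i, (x i - 1)) - ∑ i, Real.log (x i) = ∑ i, (x i - 1 - Real.log (x i)) := by
    rw [← Finset.sum_sub_distrib]
  have A1 : 0 ≤ (∏ i, x i) - 1 - Real.log (∏ i, x i) := aux_phi_nonneg hP
  have A2 : (∏ i, x i) - 1 - Real.log (∏ i, x i) ≤ ((∏ i, x i) - 1) * Real.log (∏ i, x i) :=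
    aux_phi_le_h hP
  have A3 : ∑ i, (x i - 1 - Real.log (x i)) ≤ ∑ i, (x i - 1) * Real.log (x i) :=
    Finset.sum_le_sum fun i _ => aux_phi_le_h (hx i)
  have A4 : 0 ≤ ∑ i, (x i - 1 - Real.log (x i)) :=
    Finset.sum_nonneg fun i _ => aux_phi_nonneg (hx i)
  have A5 : 0 ≤ ∑ i, (x i - 1) * Real.log (x i) :=
    Finset.sum_nonneg fun i _ => aux_h_nonneg (hx i)
  have A6 : 0 ≤ ((∏ i, x i) - 1) * Real.log (∏ i, x i) := aux_h_nonneg hP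
  rw [abs_le]
  constructor <;> [linarith [hS, A1, A3, A6, hlogP]; linarith [hS, A2, A4, A5, hlogP]]

lemma marginal_sum {N : ℕ} {A : Type*} [Fintype A] [DecidableEq A] (π : Fin N → A → ℝ)
    (hsum : ∀ j, ∑ b, π j b = 1) (i : Fin N) (f : A → ℝ) :
    ∑ a : Fin N → A, (∏ j, π j (a j)) * f (a i) = ∑ b, π i b * f b := by
  have key : ∀ a : Fin N → A,
      (∏ j, π j (a j)) * f (a i)
        = ∏ j, (Function.update π i (fun b => π i b * f b)) j (a j) := by
    intro a
    have h1 : (fun j => (Function.update π i (fun b => π i b * f b)) j (a j))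
        = Function.update (fun j => π j (a j)) i (π i (a i) * f (a i)) := by
      funext j
      rcases eq_or_ne j i with rfl | hj
      · simp
      · simp [Function.update_of_ne hj]
    rw [h1, Finset.prod_update_of_mem (Finset.mem_univ i),
      Finset.prod_eq_mul_prod_sdiff_singleton_of_mem (Finset.mem_univ i) (fun j => π j (a j))]
    ring
  rw [Finset.sum_congr rfl (fun a _ => key a), sum_prod_pi]
  rw [Finset.prod_eq_single i]
  · simp
  · intro j _ hj
    rw [Function.update_of_ne hj]
    exact hsum j
  · intro h; exact absurd (Finset.mem_univ i) h

lemma diff_marg {N : ℕ} {A : Type*} [Fintype A] [DecidableEq A] (π π' : Fin N → A → ℝ)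
    (h1 : ∀ j, ∑ b, π j b = 1) (h1' : ∀ j, ∑ b, π' j b = 1) (i : Fin N) (f : A → ℝ) :
    ∑ a : Fin N → A, (jointPmf π' a - jointPmf π a) * f (a i)
      = ∑ b, (π' i b - π i b) * f b := by
  simp only [jointPmf, sub_mul, Finset.sum_sub_distrib]
  rw [marginal_sum π h1 i f, marginal_sum π' h1' i f]

lemma Jdiv_eq {A : Type*} [Fintype A] (p q : A → ℝ) :
    Jdiv p q = ∑ a, (p a - q a) * (Real.log (p a) - Real.log (q a)) := by
  rw [Jdiv, KLdiv, KLdiv, ← Finset.sum_add_distrib]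
  exact Finset.sum_congr rfl fun a _ => by ring

/-- Second-order error of the multilinear expansion of `Φ(π)` is controlled by the
Jeffrey divergence. -/
theorem multilinear_expansion_bound
    {N : ℕ} (hN : 0 < N) {A : Type*} [Fintype A] [DecidableEq A] [Nonempty A]
    (Φ : (Fin N → A) → ℝ) (Φmax : ℝ) (hΦ : ∀ a, 0 ≤ Φ a ∧ Φ a ≤ Φmax)
    (π π' : Fin N → A → ℝ)
    (hdist : ∀ i, IsDist (π i)) (hdist' : ∀ i, IsDist (π' i))
    (hpos : ∀ i a, 0 < π i a) (hpos' : ∀ i a, 0 < π' i a) :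
    |expVal π' Φ - expVal π Φ -
        ∑ i : Fin N, (expVal (Function.update π i (π' i)) Φ - expVal π Φ)| ≤
      2 * Φmax * Jdiv (jointPmf π') (jointPmf π) := by
  have hνpos : ∀ a, 0 < jointPmf π a := fun a => Finset.prod_pos fun j _ => hpos j (a j)
  have hμpos : ∀ a, 0 < jointPmf π' a := fun a => Finset.prod_pos fun j _ => hpos' j (a j)
  have hsumπ : ∀ j, ∑ b, π j b = 1 := fun j => (hdist j).2
  have hsumπ' : ∀ j, ∑ b, π' j b = 1 := fun j => (hdist' j).2
  have hsumupd : ∀ i j, ∑ b, Function.update π i (π' i) j b = 1 := by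
    intro i j
    rcases eq_or_ne j i with rfl | hj
    · rw [Function.update_self]; exact hsumπ' j
    · rw [Function.update_of_ne hj]; exact hsumπ j
  -- the pointwise bound
  have hpt : ∀ a : Fin N → A,
      |jointPmf π' a - jointPmf π a
          - ∑ i, (jointPmf (Function.update π i (π' i)) a - jointPmf π a)|
        ≤ (jointPmf π' a - jointPmf π a) * (Real.log (jointPmf π' a) - Real.log (jointPmf π a))
          + ∑ i, (jointPmf (Function.update π i (π' i)) a - jointPmf π a)
              * (Real.log (π' i (a i)) - Real.log (π i (a i))) := by
    intro a
    set x : Fin N → ℝ := fun j => π' j (a j) / π j (a j) with hxdef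
    have hx : ∀ j, 0 < x j := fun j => div_pos (hpos' j (a j)) (hpos j (a j))
    have hprod : jointPmf π a * ∏ j, x j = jointPmf π' a := by
      simp only [jointPmf, hxdef, ← Finset.prod_mul_distrib]
      exact Finset.prod_congr rfl fun j _ => by
        rw [mul_comm]; exact div_mul_cancel₀ _ (hpos j (a j)).ne'
    have hxi : ∀ i, jointPmf π a * x i = jointPmf (Function.update π i (π' i)) a := by
      intro i
      have hL : jointPmf π a = π i (a i) * ∏ j ∈ univ \ {i}, π j (a j) :=
        Finset.prod_eq_mul_prod_sdiff_singleton_of_mem (Finset.mem_univ i) _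
      have hR : jointPmf (Function.update π i (π' i)) a
          = π' i (a i) * ∏ j ∈ univ \ {i}, π j (a j) := by
        rw [jointPmf, Finset.prod_eq_mul_prod_sdiff_singleton_of_mem (Finset.mem_univ i)]
        congr 1
        · rw [Function.update_self]
        · exact Finset.prod_congr rfl fun j hj => by
            rw [Function.update_of_ne (Finset.notMem_singleton.mp (Finset.mem_sdiff.mp hj).2)]
      rw [hL, hR, hxdef]
      rw [mul_comm (π i (a i)) (∏ j ∈ univ \ {i}, π j (a j)), mul_assoc,
        mul_comm (π i (a i)) _, div_mul_cancel₀ _ (hpos i (a i)).ne', mul_comm]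
    have hlogx : ∀ j, Real.log (x j) = Real.log (π' j (a j)) - Real.log (π j (a j)) :=
      fun j => Real.log_div (hpos' j (a j)).ne' (hpos j (a j)).ne'
    have hlogprod : Real.log (∏ j, x j) = Real.log (jointPmf π' a) - Real.log (jointPmf π a) := by
      have h : ∏ j, x j = jointPmf π' a / jointPmf π a := by
        rw [eq_div_iff (hνpos a).ne', mul_comm]; exact hprod
      rw [h, Real.log_div (hμpos a).ne' (hνpos a).ne']
    have hceq : jointPmf π' a - jointPmf π a
          - ∑ i, (jointPmf (Function.update π i (π' i)) a - jointPmf π a)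
        = jointPmf π a * ((∏ j, x j) - 1 - ∑ j, (x j - 1)) := by
      rw [mul_sub, mul_sub, mul_one, Finset.mul_sum, hprod]
      congr 1
      exact Finset.sum_congr rfl fun i _ => by rw [mul_sub, mul_one, hxi i]
    rw [hceq, abs_mul, abs_of_pos (hνpos a)]
    calc jointPmf π a * |(∏ j, x j) - 1 - ∑ j, (x j - 1)|
        ≤ jointPmf π a * (((∏ j, x j) - 1) * Real.log (∏ j, x j)
            + ∑ j, (x j - 1) * Real.log (x j)) :=
          mul_le_mul_of_nonneg_left (key_ineq x hx) (hνpos a).le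
      _ = _ := by
          rw [mul_add, Finset.mul_sum]
          congr 1
          · rw [← mul_assoc, mul_sub, mul_one, hprod, hlogprod]
          · exact Finset.sum_congr rfl fun i _ => by
              rw [← mul_assoc, mul_sub, mul_one, hxi i, hlogx i]
  -- rewrite the LHS as a single sum
  have hrw : expVal π' Φ - expVal π Φ
        - ∑ i : Fin N, (expVal (Function.update π i (π' i)) Φ - expVal π Φ)
      = ∑ a : Fin N → A,
          (jointPmf π' a - jointPmf π a
            - ∑ i, (jointPmf (Function.update π i (π' i)) a - jointPmf π a)) * Φ a := by
    simp only [expVal, sub_mul, Finset.sum_sub_distrib, Finset.sum_mul]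
    congr 1
    congr 1 <;> exact Finset.sum_comm
  -- identify the sums of the bounds with Jeffrey divergences
  have hsum1 : ∑ a : Fin N → A,
      (jointPmf π' a - jointPmf π a) * (Real.log (jointPmf π' a) - Real.log (jointPmf π a))
      = Jdiv (jointPmf π') (jointPmf π) := (Jdiv_eq _ _).symm
  have hmargJ : ∀ i : Fin N,
      ∑ a : Fin N → A, (jointPmf (Function.update π i (π' i)) a - jointPmf π a)
          * (Real.log (π' i (a i)) - Real.log (π i (a i)))
        = Jdiv (π' i) (π i) := by
    intro i
    have h := diff_marg π (Function.update π i (π' i)) hsumπ (hsumupd i) i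
      (fun b => Real.log (π' i b) - Real.log (π i b))
    rw [Function.update_self] at h
    rw [h, Jdiv_eq]
  have htensor : ∑ i, Jdiv (π' i) (π i) = Jdiv (jointPmf π') (jointPmf π) := by
    rw [Jdiv_eq (jointPmf π') (jointPmf π)]
    have hlog : ∀ a : Fin N → A, Real.log (jointPmf π' a) - Real.log (jointPmf π a)
        = ∑ i, (Real.log (π' i (a i)) - Real.log (π i (a i))) := by
      intro a
      rw [jointPmf, jointPmf, Real.log_prod (fun j _ => (hpos' j (a j)).ne'),
        Real.log_prod (fun j _ => (hpos j (a j)).ne'), ← Finset.sum_sub_distrib]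
    calc ∑ i, Jdiv (π' i) (π i)
        = ∑ i, ∑ a : Fin N → A, (jointPmf π' a - jointPmf π a)
            * (Real.log (π' i (a i)) - Real.log (π i (a i))) := by
          refine Finset.sum_congr rfl fun i _ => ?_
          rw [Jdiv_eq, ← diff_marg π π' hsumπ hsumπ' i
            (fun b => Real.log (π' i b) - Real.log (π i b))]
      _ = ∑ a : Fin N → A, (jointPmf π' a - jointPmf π a)
            * (Real.log (jointPmf π' a) - Real.log (jointPmf π a)) := by
          rw [Finset.sum_comm]
          exact Finset.sum_congr rfl fun a _ => by rw [hlog a, Finset.mul_sum]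
  -- put everything together
  rw [hrw]
  calc |∑ a : Fin N → A,
        (jointPmf π' a - jointPmf π a
          - ∑ i, (jointPmf (Function.update π i (π' i)) a - jointPmf π a)) * Φ a|
      ≤ ∑ a : Fin N → A,
        |(jointPmf π' a - jointPmf π a
          - ∑ i, (jointPmf (Function.update π i (π' i)) a - jointPmf π a)) * Φ a| :=
        Finset.abs_sum_le_sum_abs _ _
    _ ≤ ∑ a : Fin N → A,
        ((jointPmf π' a - jointPmf π a) * (Real.log (jointPmf π' a) - Real.log (jointPmf π a))
          + ∑ i, (jointPmf (Function.update π i (π' i)) a - jointPmf π a)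
              * (Real.log (π' i (a i)) - Real.log (π i (a i)))) * Φmax := by
        refine Finset.sum_le_sum fun a _ => ?_
        rw [abs_mul]
        refine mul_le_mul (hpt a) ?_ (abs_nonneg _) (le_trans (abs_nonneg _) (hpt a))
        rw [abs_of_nonneg (hΦ a).1]
        exact (hΦ a).2
    _ = (Jdiv (jointPmf π') (jointPmf π) + ∑ i, Jdiv (π' i) (π i)) * Φmax := by
        rw [← Finset.sum_mul]
        congr 1
        rw [Finset.sum_add_distrib, hsum1]
        congr 1
        rw [Finset.sum_comm]
        exact Finset.sum_congr rfl fun i _ => hmargJ i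
    _ = 2 * Φmax * Jdiv (jointPmf π') (jointPmf π) := by rw [htensor]; ring
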